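/- Let K ⊂ ℝ² be compact. For each n ∈ ℕ, let a₁ⁿ,…,aₙⁿ ∈ K be pairwise distinct points, let μⁿ = (1/n)∑_{i=1}^n δ_{aᵢⁿ}, and suppose μⁿ converges weakly-* to a probability measure μ on K. If the discrete logarithmic interaction energies are uniformly bounded above, i.e. there exists C > 0 with −(1/n²)∑_{i≠j} log|aᵢⁿ − aⱼⁿ| ≤ C for all n, then μ⊗μ does not charge the diagonal: (μ⊗μ)({(y,z) : y = z}) = 0. In particular, μ charges no points. -/

import Mathlib

open MeasureTheory Filter Topology
open scoped ENNReal

theorem stmt12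
    (K : Set (EuclideanSpace ℝ (Fin 2))) (hK : IsCompact K)
    (a : ℕ → ℕ → EuclideanSpace ℝ (Fin 2))
    (ha : ∀ n, ∀ i < n, a n i ∈ K)
    (hdist : ∀ n, ∀ i < n, ∀ j < n, i ≠ j → a n i ≠ a n j)
    (μ : Measure (EuclideanSpace ℝ (Fin 2))) [IsProbabilityMeasure μ]
    (hμK : μ Kᶜ = 0)
    (hconv : ∀ ψ : EuclideanSpace ℝ (Fin 2) → ℝ, Continuous ψ →
      Tendsto (fun n : ℕ =>
          ∫ x, ψ x ∂(((n : ℝ≥0∞))⁻¹ • ∑ i ∈ Finset.range n, Measure.dirac (a n i)))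
        atTop (𝓝 (∫ x, ψ x ∂μ)))
    (C : ℝ) (hC : 0 < C)
    (hbound : ∀ n : ℕ,
      -((n : ℝ) ^ 2)⁻¹ *
          ∑ q ∈ (Finset.range n).offDiag, Real.log ‖a n q.1 - a n q.2‖ ≤ C) :
    (μ.prod μ) {p : EuclideanSpace ℝ (Fin 2) × EuclideanSpace ℝ (Fin 2) | p.1 = p.2} = 0 ∧
      ∀ x, μ {x} = 0 := by
  -- a diameter bound for K
  obtain ⟨D₀, hD₀⟩ := Metric.isBounded_iff.mp hK.isBounded
  set D : ℝ := max D₀ 1 with hDdef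
  have hD1 : (1:ℝ) ≤ D := le_max_right _ _
  have hDbound : ∀ p ∈ K, ∀ q ∈ K, ‖p - q‖ ≤ D := fun p hp q hq => by
    calc ‖p - q‖ = dist p q := (dist_eq_norm p q).symm
    _ ≤ D₀ := hD₀ hp hq
    _ ≤ D := le_max_left _ _
  have hlogD : 0 ≤ Real.log D := Real.log_nonneg hD1
  have key : ∀ x, μ {x} = 0 := by
    intro x
    by_contra hx
    set ε : ℝ := (μ {x}).toReal with hεdef
    have hε0 : 0 < ε := ENNReal.toReal_pos hx (measure_lt_top μ _).ne
    -- choose scale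
    set T : ℝ := max 1 (8*(C + Real.log D)/ε^2 + 1) with hTdef
    have hT1 : 1 ≤ T := le_max_left _ _
    have hTbig : 8*(C + Real.log D)/ε^2 + 1 ≤ T := le_max_right _ _
    set r : ℝ := Real.exp (-T) / 2 with hrdef
    have hr0 : 0 < r := by positivity
    have h2r : 2 * r = Real.exp (-T) := by rw [hrdef]; ring
    have hlog2r : Real.log (2*r) = -T := by rw [h2r, Real.log_exp]
    -- test function
    set ψ : EuclideanSpace ℝ (Fin 2) → ℝ := fun y => max 0 (1 - ‖y - x‖ / r) with hψdef
    have hψc : Continuous ψ := by fun_prop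
    have hψ0 : ∀ y, 0 ≤ ψ y := fun y => le_max_left _ _
    have hψ1 : ∀ y, ψ y ≤ 1 := by
      intro y
      apply max_le (by norm_num)
      have : 0 ≤ ‖y - x‖ / r := by positivity
      linarith
    have hψout : ∀ y, r ≤ ‖y - x‖ → ψ y = 0 := by
      intro y hy
      have : 1 - ‖y - x‖ / r ≤ 0 := by
        rw [sub_nonpos, le_div_iff₀ hr0]; nlinarith [norm_nonneg (y - x)]
      simp [hψdef, max_eq_left this]
    have hψsupp : HasCompactSupport ψ := by
      apply HasCompactSupport.intro (isCompact_closedBall x r)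
      intro y hy
      simp only [Metric.mem_closedBall, not_le, dist_eq_norm] at hy
      exact hψout y hy.le
    have hψint : Integrable ψ μ := hψc.integrable_of_hasCompactSupport hψsupp
    -- lower bound on ∫ψ dμ
    have hεle : ε ≤ ∫ y, ψ y ∂μ := by
      have hind : Integrable (Set.indicator {x} (fun _ => (1:ℝ))) μ :=
        (integrable_const (1:ℝ)).indicator (measurableSet_singleton x)
      have hle : ∀ y, Set.indicator {x} (fun _ => (1:ℝ)) y ≤ ψ y := by
        intro y
        by_cases hyx : y ∈ ({x} : Set _)
        · rw [Set.indicator_of_mem hyx]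
          rcases hyx with rfl
          simp [hψdef]
        · rw [Set.indicator_of_notMem hyx]; exact hψ0 y
      calc ε = (μ {x}).toReal • (1:ℝ) := by simp [hεdef]
      _ = ∫ y, Set.indicator {x} (fun _ => (1:ℝ)) y ∂μ :=
          (integral_indicator_const (1:ℝ) (measurableSet_singleton x)).symm
      _ ≤ ∫ y, ψ y ∂μ := integral_mono hind hψint hle
    -- empirical integrals
    have hemp : ∀ n : ℕ,
        (∫ y, ψ y ∂(((n : ℝ≥0∞))⁻¹ • ∑ i ∈ Finset.range n, Measure.dirac (a n i)))
          = (n : ℝ)⁻¹ * ∑ i ∈ Finset.range n, ψ (a n i) := by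
      intro n
      rw [integral_smul_measure, integral_finset_sum_measure]
      · simp only [integral_dirac, smul_eq_mul]
        congr 1
        simp [ENNReal.toReal_inv]
      · intro i _
        exact hψc.integrable_of_hasCompactSupport hψsupp
    -- eventual concentration
    have hev : ∀ᶠ n : ℕ in atTop,
        ε/2 < (n : ℝ)⁻¹ * ∑ i ∈ Finset.range n, ψ (a n i) := by
      have h := (hconv ψ hψc).eventually (eventually_gt_nhds
        (show ε/2 < ∫ y, ψ y ∂μ from lt_of_lt_of_le (by linarith) hεle))
      filter_upwards [h] with n hn
      rw [← hemp n]; exact hn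
    obtain ⟨n, hn8, hnε⟩ := ((eventually_ge_atTop (⌈(8:ℝ)/ε^2⌉₊ + 1)).and hev).exists
    have hn0 : 0 < n := lt_of_lt_of_le (Nat.succ_pos _) hn8
    have hn0' : (0:ℝ) < n := by exact_mod_cast hn0
    have hn2 : (0:ℝ) < (n:ℝ)^2 := by positivity
    have h8 : (8:ℝ) ≤ ε^2 * n := by
      have h1 : (8:ℝ)/ε^2 ≤ (⌈(8:ℝ)/ε^2⌉₊ : ℝ) := Nat.le_ceil _
      have h2 : ((⌈(8:ℝ)/ε^2⌉₊ : ℝ) + 1) ≤ n := by exact_mod_cast hn8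
      have h3 : (8:ℝ)/ε^2 ≤ n := by linarith
      rw [div_le_iff₀ (by positivity)] at h3
      linarith [h3]
    -- the concentrated set
    set S : Finset ℕ := (Finset.range n).filter (fun i => ‖a n i - x‖ < r) with hSdef
    set m : ℕ := S.card with hmdef
    have hsum_le : ∑ i ∈ Finset.range n, ψ (a n i) ≤ (m : ℝ) := by
      have hA : ∑ i ∈ S, ψ (a n i) ≤ (m:ℝ) := by
        calc ∑ i ∈ S, ψ (a n i) ≤ ∑ _i ∈ S, (1:ℝ) :=
          Finset.sum_le_sum (fun i _ => hψ1 _)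
        _ = (m:ℝ) := by simp [hmdef]
      have hB : ∑ i ∈ (Finset.range n).filter (fun i => ¬ ‖a n i - x‖ < r),
          ψ (a n i) = 0 :=
        Finset.sum_eq_zero (fun i hi =>
          hψout _ (not_lt.mp (Finset.mem_filter.mp hi).2))
      calc ∑ i ∈ Finset.range n, ψ (a n i)
          = ∑ i ∈ S, ψ (a n i) +
            ∑ i ∈ (Finset.range n).filter (fun i => ¬ ‖a n i - x‖ < r), ψ (a n i) :=
            (Finset.sum_filter_add_sum_filter_not (Finset.range n) _ _).symm
      _ ≤ (m:ℝ) := by rw [hB]; linarith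
    have hmε : (ε/2) * n < (m : ℝ) := by
      have h1 : ε/2 < (n:ℝ)⁻¹ * (m:ℝ) := lt_of_lt_of_le hnε (by
        apply mul_le_mul_of_nonneg_left hsum_le (by positivity))
      rw [inv_mul_eq_div, lt_div_iff₀ hn0'] at h1
      linarith
    have hm0 : (0:ℝ) < m := lt_trans (by positivity) hmε
    have hm1 : 1 ≤ m := by exact_mod_cast Nat.one_le_iff_ne_zero.mpr (by
      intro h; rw [h] at hm0; norm_num at hm0)
    have hmn : (m:ℝ) ≤ n := by
      exact_mod_cast Finset.card_le_card (Finset.filter_subset _ _) |>.trans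
        (le_of_eq (Finset.card_range n))
    -- energy estimate
    have hSsub : S ⊆ Finset.range n := Finset.filter_subset _ _
    have hSDsub : S.offDiag ⊆ (Finset.range n).offDiag := by
      intro q hq
      rw [Finset.mem_offDiag] at hq ⊢
      exact ⟨hSsub hq.1, hSsub hq.2.1, hq.2.2⟩
    have hpos : ∀ q ∈ (Finset.range n).offDiag, 0 < ‖a n q.1 - a n q.2‖ := by
      intro q hq
      rw [Finset.mem_offDiag, Finset.mem_range, Finset.mem_range] at hq
      rw [norm_pos_iff, sub_ne_zero]
      exact hdist n q.1 hq.1 q.2 hq.2.1 hq.2.2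
    have htermD : ∀ q ∈ (Finset.range n).offDiag,
        Real.log ‖a n q.1 - a n q.2‖ ≤ Real.log D := by
      intro q hq
      have h1 := hpos q hq
      rw [Finset.mem_offDiag, Finset.mem_range, Finset.mem_range] at hq
      exact Real.log_le_log h1 (hDbound _ (ha n q.1 hq.1) _ (ha n q.2 hq.2.1))
    have htermS : ∀ q ∈ S.offDiag, Real.log ‖a n q.1 - a n q.2‖ ≤ -T := by
      intro q hq
      have h1 := hpos q (hSDsub hq)
      rw [Finset.mem_offDiag] at hq
      have hq1 := (Finset.mem_filter.mp hq.1).2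
      have hq2 := (Finset.mem_filter.mp hq.2.1).2
      have hnorm : ‖a n q.1 - a n q.2‖ ≤ 2 * r := by
        have h2 := norm_sub_le (a n q.1 - x) (a n q.2 - x)
        rw [sub_sub_sub_cancel_right] at h2
        linarith
      rw [← hlog2r]
      exact Real.log_le_log h1 hnorm
    have hcardSD : (S.offDiag.card : ℝ) = (m:ℝ)*m - m := by
      rw [Finset.offDiag_card, ← hmdef]
      have : m ≤ m * m := Nat.le_mul_of_pos_left m (by omega)
      push_cast [Nat.cast_sub this]
      ring
    have hcardRS : ((Finset.range n).offDiag.card : ℝ) ≤ (n:ℝ)^2 := by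
      rw [Finset.offDiag_card, Finset.card_range]
      calc ((n*n - n : ℕ):ℝ) ≤ ((n*n : ℕ):ℝ) := by exact_mod_cast Nat.sub_le _ _
      _ = (n:ℝ)^2 := by push_cast; ring
    have hSig : ∑ q ∈ (Finset.range n).offDiag, Real.log ‖a n q.1 - a n q.2‖
        ≤ ((m:ℝ)*m - m) * (-T) + (n:ℝ)^2 * Real.log D := by
      rw [← Finset.sum_sdiff hSDsub]
      have e1 : ∑ q ∈ S.offDiag, Real.log ‖a n q.1 - a n q.2‖
          ≤ ((m:ℝ)*m - m) * (-T) := by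
        rw [← hcardSD]
        have := Finset.sum_le_card_nsmul S.offDiag
          (fun q => Real.log ‖a n q.1 - a n q.2‖) (-T) htermS
        simpa [nsmul_eq_mul] using this
      have e2 : ∑ q ∈ (Finset.range n).offDiag \ S.offDiag,
          Real.log ‖a n q.1 - a n q.2‖ ≤ (n:ℝ)^2 * Real.log D := by
        have h1 := Finset.sum_le_card_nsmul ((Finset.range n).offDiag \ S.offDiag)
          (fun q => Real.log ‖a n q.1 - a n q.2‖) (Real.log D)
          (fun q hq => htermD q (Finset.mem_sdiff.mp hq).1)
        rw [nsmul_eq_mul] at h1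
        refine h1.trans ?_
        have h2 : (((Finset.range n).offDiag \ S.offDiag).card : ℝ)
            ≤ (n:ℝ)^2 := le_trans
          (by exact_mod_cast Finset.card_le_card (Finset.sdiff_subset)) hcardRS
        exact mul_le_mul_of_nonneg_right h2 hlogD
      linarith
    -- combine with hbound
    have hb2 := mul_le_mul_of_nonneg_left (hbound n) hn2.le
    rw [← mul_assoc, mul_neg, mul_inv_cancel₀ hn2.ne'] at hb2
    -- hb2 : -1 * Σ ≤ n^2 * C
    have hkey : ((m:ℝ)*m - m) * T ≤ (n:ℝ)^2 * (C + Real.log D) := by linarith [hSig, hb2]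
    have hq : (ε^2/8) * (n:ℝ)^2 ≤ (m:ℝ)*m - m := by
      have hp1 : (ε/2*n)*(ε/2*n) ≤ (m:ℝ)*m :=
        mul_le_mul hmε.le hmε.le (by positivity) (Nat.cast_nonneg m)
      have hp2 : 8*(n:ℝ) ≤ ε^2*n*n := by linarith [mul_le_mul_of_nonneg_right h8 hn0'.le]
      linarith [hp1, hp2, hmn]
    have hTC : (ε^2/8) * T ≤ C + Real.log D := by
      have h4 : (ε^2/8) * (n:ℝ)^2 * T ≤ ((m:ℝ)*m - m) * T :=
        mul_le_mul_of_nonneg_right hq (by linarith)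
      have h5 : (n:ℝ)^2 * ((ε^2/8) * T) ≤ (n:ℝ)^2 * (C + Real.log D) := by
        linarith [h4, hkey]
      exact le_of_mul_le_mul_left h5 hn2
    have hcontra : C + Real.log D < (ε^2/8) * T := by
      have heq : (ε^2/8) * (8*(C + Real.log D)/ε^2 + 1) = C + Real.log D + ε^2/8 := by
        field_simp
      have hpos8 : (0:ℝ) < ε^2/8 := by positivity
      linarith [mul_le_mul_of_nonneg_left hTbig (by positivity : (0:ℝ) ≤ ε^2/8), heq]
    linarith
  refine ⟨?_, key⟩
  have hm : MeasurableSet {p : EuclideanSpace ℝ (Fin 2) × EuclideanSpace ℝ (Fin 2) | p.1 = p.2} :=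
    measurableSet_eq_fun measurable_fst measurable_snd
  rw [Measure.prod_apply hm]
  have hpre : ∀ y : EuclideanSpace ℝ (Fin 2),
      (Prod.mk y ⁻¹' {p : EuclideanSpace ℝ (Fin 2) × EuclideanSpace ℝ (Fin 2) | p.1 = p.2})
        = {y} := by
    intro y; ext z; simp [eq_comm]
  simp only [hpre, key]
  simp
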